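/- Let X₁,…,X_n (n ≥ 2) be i.i.d. random vectors in ℝⁿ such that X₁,…,X_{n−1} are linearly independent almost surely and such that the X_i are bounded (there is r > 0 with ‖X_i‖₁ < r almost surely). Set Y = ∧(X₁,…,X_{n−1}) / ‖∧(X₁,…,X_{n−1})‖_∞. Then for every y ∈ C_{n−1}(Y) one has 0 ∈ C₁(X_n·y), i.e. liminf_{ε→0⁺} P(|X_n·y| < ε)/ε > 0. -/

import Mathlib

open MeasureTheory Filter Matrix

/-- The generalized cross product of `m` vectors in `ℝ^(m+1)`. -/
noncomputable def gcross {m : ℕ} (x : Fin m → (Fin (m + 1) → ℝ)) : Fin (m + 1) → ℝ :=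
  fun i => (Matrix.of (Fin.cons (Pi.single i 1) x)).det

/-- `Y = ∧(X₁,…,X_{n-1}) / ‖∧(X₁,…,X_{n-1})‖_∞`; here `ℝⁿ = Fin (m+1) → ℝ` carries
the sup norm as its norm. -/
noncomputable def Yvec {Ω : Type*} {m : ℕ} (X : Fin (m + 1) → Ω → (Fin (m + 1) → ℝ))
    (ω : Ω) : Fin (m + 1) → ℝ :=
  (‖gcross fun j => X (Fin.castSucc j) ω‖)⁻¹ • gcross fun j => X (Fin.castSucc j) ω

lemma dot_gcross {m : ℕ} (x : Fin m → (Fin (m + 1) → ℝ)) (v : Fin (m + 1) → ℝ) :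
    v ⬝ᵥ gcross x = (Matrix.of (Fin.cons v x)).det := by
  have h1 : (Fin.cons v x : Fin (m + 1) → (Fin (m + 1) → ℝ))
      = Function.update (Fin.cons v x) 0 (∑ i, v i • (Pi.single i 1 : Fin (m+1) → ℝ)) := by
    rw [Fin.update_cons_zero]
    have h : v = ∑ i, v i • (Pi.single i 1 : Fin (m+1) → ℝ) := by
      funext j
      rw [Finset.sum_apply]
      simp [Pi.single_apply]
    rw [← h]
  have h2 : (Matrix.of (Fin.cons v x)).det
      = (Matrix.detRowAlternating : (Fin (m+1) → ℝ) [⋀^Fin (m+1)]→ₗ[ℝ] ℝ)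
          (Fin.cons v x) := rfl
  rw [h2]
  conv_lhs => skip
  rw [h1, AlternatingMap.map_update_sum]
  unfold dotProduct
  refine Finset.sum_congr rfl fun i _ => ?_
  rw [AlternatingMap.map_update_smul]
  rw [Fin.update_cons_zero]
  rfl

lemma dot_gcross_self {m : ℕ} (x : Fin m → (Fin (m + 1) → ℝ)) (j : Fin m) :
    x j ⬝ᵥ gcross x = 0 := by
  rw [dot_gcross]
  refine Matrix.det_zero_of_row_eq (M := Matrix.of (Fin.cons (x j) x))
    (i := 0) (j := j.succ) (Fin.succ_ne_zero j).symm ?_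
  show (Fin.cons (x j) x : Fin (m+1) → (Fin (m+1) → ℝ)) 0
      = (Fin.cons (x j) x : Fin (m+1) → (Fin (m+1) → ℝ)) j.succ
  rw [Fin.cons_zero, Fin.cons_succ]

lemma dot_Yvec {Ω : Type*} {m : ℕ} (X : Fin (m + 1) → Ω → (Fin (m + 1) → ℝ))
    (ω : Ω) (j : Fin m) : X (Fin.castSucc j) ω ⬝ᵥ Yvec X ω = 0 := by
  unfold Yvec
  rw [dotProduct_smul]
  rw [dot_gcross_self (fun j => X (Fin.castSucc j) ω) j]
  simp

lemma abs_dot_le {m : ℕ} (v w : Fin (m + 1) → ℝ) :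
    |v ⬝ᵥ w| ≤ (∑ k, |v k|) * ‖w‖ := by
  calc |v ⬝ᵥ w| ≤ ∑ k, |v k * w k| := Finset.abs_sum_le_sum_abs _ _
    _ ≤ ∑ k, |v k| * ‖w‖ := by
        refine Finset.sum_le_sum fun k _ => ?_
        rw [abs_mul]
        refine mul_le_mul_of_nonneg_left ?_ (abs_nonneg _)
        simpa [Real.norm_eq_abs] using norm_le_pi_norm w k
    _ = (∑ k, |v k|) * ‖w‖ := by rw [Finset.sum_mul]

/-- If `X₁, …, X_n` (`n = m+1 ≥ 2`) are i.i.d. bounded random vectors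
in `ℝⁿ` (with `‖X_i‖₁ < r` a.s.) whose first `n-1` coordinates are a.s. linearly
independent, and `Y = ∧(X₁,…,X_{n-1})/‖∧(X₁,…,X_{n-1})‖_∞`, then for every
`y ∈ C_{n-1}(Y)` one has `0 ∈ C₁(X_n · y)`. -/
theorem mould_zero_of_mem_mould_Yvec {Ω : Type*} [MeasurableSpace Ω]
    (μ : Measure Ω) [IsProbabilityMeasure μ] {m : ℕ} (hm : 1 ≤ m)
    (X : Fin (m + 1) → Ω → (Fin (m + 1) → ℝ))
    (hmeas : ∀ i, Measurable (X i))
    (hindep : ProbabilityTheory.iIndepFun X μ)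
    (hident : ∀ i, μ.map (X i) = μ.map (X 0))
    (hli : ∀ᵐ ω ∂μ, LinearIndependent ℝ (fun j : Fin m => X (Fin.castSucc j) ω))
    (r : ℝ) (hr : ∀ i, ∀ᵐ ω ∂μ, ∑ k, |X i ω k| < r)
    (y : Fin (m + 1) → ℝ)
    (hy : 0 < Filter.liminf
        (fun ε : ℝ => μ {ω | ‖Yvec X ω - y‖ < ε} / ENNReal.ofReal (ε ^ m))
        (nhdsWithin 0 (Set.Ioi 0))) :
    0 < Filter.liminf
        (fun ε : ℝ => μ {ω | |X (Fin.last m) ω ⬝ᵥ y| < ε} / ENNReal.ofReal ε)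
        (nhdsWithin 0 (Set.Ioi 0)) := by
  -- r is positive
  have hr0 : 0 < r := by
    obtain ⟨ω, hω⟩ := (hr 0).exists
    exact lt_of_le_of_lt (Finset.sum_nonneg fun k _ => abs_nonneg _) hω
  -- basic measurable sets
  set B : ℝ → Set (Fin (m + 1) → ℝ) := fun t => {x | |x ⬝ᵥ y| < t} with hB
  have hBmeas : ∀ t, MeasurableSet (B t) := by
    intro t
    have hdot : Measurable fun x : Fin (m + 1) → ℝ => |x ⬝ᵥ y| := by
      apply Measurable.abs
      unfold dotProduct
      exact Finset.measurable_sum _ fun k _ => (measurable_pi_apply k).mul_const _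
    exact measurableSet_lt hdot measurable_const
  set q : ℝ → ENNReal := fun t => μ (X 0 ⁻¹' B t) with hq
  have hmapq : ∀ i t, μ (X i ⁻¹' B t) = q t := by
    intro i t
    show μ (X i ⁻¹' B t) = μ (X 0 ⁻¹' B t)
    rw [← Measure.map_apply (hmeas i) (hBmeas t), ← Measure.map_apply (hmeas 0) (hBmeas t),
      hident i]
  -- the a.e. bound event
  have hE : ∀ᵐ ω ∂μ, ∀ j : Fin m, ∑ k, |X (Fin.castSucc j) ω k| < r :=
    ae_all_iff.2 fun j => hr _
  -- main measure inequality
  have hsub : ∀ ε : ℝ, 0 < ε → μ {ω | ‖Yvec X ω - y‖ < ε} ≤ q (r * ε) ^ m := by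
    intro ε hε
    have hinter : μ (⋂ j : Fin m, X (Fin.castSucc j) ⁻¹' B (r * ε)) = q (r * ε) ^ m := by
      have h1 : (⋂ j : Fin m, X (Fin.castSucc j) ⁻¹' B (r * ε))
          = ⋂ i ∈ Finset.image Fin.castSucc (Finset.univ : Finset (Fin m)),
              X i ⁻¹' B (r * ε) := by
        ext ω
        constructor
        · intro hω
          refine Set.mem_iInter₂.2 fun i hi => ?_
          obtain ⟨j, -, rfl⟩ := Finset.mem_image.1 hi
          exact Set.mem_iInter.1 hω j
        · intro hω
          refine Set.mem_iInter.2 fun j => ?_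
          exact Set.mem_iInter₂.1 hω _ (Finset.mem_image_of_mem _ (Finset.mem_univ j))
      rw [h1, hindep.meas_biInter (fun i _ => ⟨B (r * ε), hBmeas _, rfl⟩)]
      rw [Finset.prod_image (fun a _ b _ hab => Fin.castSucc_injective m hab)]
      simp only [hmapq]
      rw [Finset.prod_const, Finset.card_univ, Fintype.card_fin]
    rw [← hinter]
    refine measure_mono_ae ?_
    filter_upwards [hE] with ω hω hball
    have hball : ‖Yvec X ω - y‖ < ε := hball
    refine Set.mem_iInter.2 fun j => ?_
    show |X (Fin.castSucc j) ω ⬝ᵥ y| < r * ε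
    have horth : X (Fin.castSucc j) ω ⬝ᵥ y
        = X (Fin.castSucc j) ω ⬝ᵥ (y - Yvec X ω) := by
      rw [dotProduct_sub, dot_Yvec, sub_zero]
    have hnorm : ‖y - Yvec X ω‖ < ε := by rwa [norm_sub_rev]
    have hbound := abs_dot_le (X (Fin.castSucc j) ω) (y - Yvec X ω)
    have hS := hω j
    have hS0 : 0 ≤ ∑ k, |X (Fin.castSucc j) ω k| :=
      Finset.sum_nonneg fun k _ => abs_nonneg _
    have hn0 : 0 ≤ ‖y - Yvec X ω‖ := norm_nonneg _
    rw [horth]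
    nlinarith
  -- choose the constant
  set L := Filter.liminf
      (fun ε : ℝ => μ {ω | ‖Yvec X ω - y‖ < ε} / ENNReal.ofReal (ε ^ m))
      (nhdsWithin 0 (Set.Ioi 0)) with hL
  set c : ENNReal := min L 1 / 2 with hc
  have hc0 : 0 < c := by
    rw [hc]
    simp only [ENNReal.div_pos_iff]
    refine ⟨?_, by norm_num⟩
    exact ne_of_gt (lt_min hy one_pos)
  have hcT : c ≠ ⊤ := by
    rw [hc]
    exact ne_top_of_le_ne_top (by norm_num : (1:ENNReal)/2 ≠ ⊤)
      (ENNReal.div_le_div_right (min_le_right L 1) 2)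
  have hcL : c < L := by
    calc c < min L 1 := ENNReal.half_lt_self (ne_of_gt (lt_min hy one_pos))
              (ne_top_of_le_ne_top ENNReal.one_ne_top (min_le_right L 1))
      _ ≤ L := min_le_left _ _
  set d : ENNReal := c ^ ((1 : ℝ) / m) with hd
  have hmne : (m : ℝ) ≠ 0 := Nat.cast_ne_zero.2 (by omega)
  have hrootkey : ∀ z : ENNReal, (z ^ m) ^ ((1:ℝ) / m) = z := by
    intro z
    rw [← ENNReal.rpow_natCast z m, ← ENNReal.rpow_mul, mul_one_div, div_self hmne,
      ENNReal.rpow_one]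
  have hd0 : 0 < d := ENNReal.rpow_pos hc0 hcT
  -- eventually bound
  have hev1 : ∀ᶠ ε : ℝ in nhdsWithin 0 (Set.Ioi 0),
      c < μ {ω | ‖Yvec X ω - y‖ < ε} / ENNReal.ofReal (ε ^ m) :=
    Filter.eventually_lt_of_lt_liminf hcL
  have hevpos : ∀ᶠ ε : ℝ in nhdsWithin 0 (Set.Ioi 0), ε ∈ Set.Ioi (0:ℝ) :=
    eventually_mem_nhdsWithin
  have hev2 : ∀ᶠ ε : ℝ in nhdsWithin 0 (Set.Ioi 0),
      d * ENNReal.ofReal ε ≤ q (r * ε) := by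
    filter_upwards [hev1, hevpos] with ε h1 h2
    have hε : (0:ℝ) < ε := h2
    have hεm : ENNReal.ofReal (ε ^ m) ≠ 0 :=
      ne_of_gt (ENNReal.ofReal_pos.2 (pow_pos hε m))
    have h3 : c * ENNReal.ofReal (ε ^ m) < μ {ω | ‖Yvec X ω - y‖ < ε} :=
      (ENNReal.lt_div_iff_mul_lt (Or.inl hεm) (Or.inl ENNReal.ofReal_ne_top)).1 h1
    have h5 : c * ENNReal.ofReal ε ^ m ≤ q (r * ε) ^ m := by
      rw [← ENNReal.ofReal_pow hε.le]
      exact le_trans h3.le (hsub ε hε)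
    have h6 := ENNReal.rpow_le_rpow h5 (by positivity : (0:ℝ) ≤ 1 / m)
    rw [hrootkey, ENNReal.mul_rpow_of_nonneg _ _ (by positivity : (0:ℝ) ≤ 1 / m),
      hrootkey] at h6
    exact h6
  -- transfer along t ↦ t / r
  have hdiv : Tendsto (fun t : ℝ => t / r) (nhdsWithin 0 (Set.Ioi 0))
      (nhdsWithin 0 (Set.Ioi 0)) := by
    rw [tendsto_nhdsWithin_iff]
    constructor
    · have h0 : Tendsto (fun t : ℝ => t / r) (nhds 0) (nhds (0 / r)) :=
        Filter.Tendsto.div_const tendsto_id r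
      rw [zero_div] at h0
      exact h0.mono_left nhdsWithin_le_nhds
    · filter_upwards [eventually_mem_nhdsWithin] with t ht
      exact div_pos ht hr0
  have hev3 := hdiv.eventually hev2
  -- final eventual bound
  set a : ENNReal := d / ENNReal.ofReal r with ha
  have ha0 : 0 < a := by
    rw [ha]
    simp only [ENNReal.div_pos_iff]
    exact ⟨ne_of_gt hd0, ENNReal.ofReal_ne_top⟩
  have hfinal : ∀ᶠ t : ℝ in nhdsWithin 0 (Set.Ioi 0),
      a ≤ μ {ω | |X (Fin.last m) ω ⬝ᵥ y| < t} / ENNReal.ofReal t := by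
    filter_upwards [hev3, hevpos] with t h1 ht
    have ht0 : (0:ℝ) < t := ht
    have hrt : r * (t / r) = t := by field_simp
    rw [hrt] at h1
    have hofdiv : ENNReal.ofReal (t / r) = ENNReal.ofReal t / ENNReal.ofReal r :=
      ENNReal.ofReal_div_of_pos hr0
    have h2 : a * ENNReal.ofReal t ≤ q t := by
      rw [ha]
      calc d / ENNReal.ofReal r * ENNReal.ofReal t
          = d * (ENNReal.ofReal t / ENNReal.ofReal r) := by
            rw [div_eq_mul_inv, div_eq_mul_inv, mul_assoc, mul_comm (ENNReal.ofReal r)⁻¹]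
        _ = d * ENNReal.ofReal (t / r) := by rw [hofdiv]
        _ ≤ q t := h1
    have hsets : {ω | |X (Fin.last m) ω ⬝ᵥ y| < t} = X (Fin.last m) ⁻¹' B t := rfl
    rw [hsets, hmapq]
    refine (ENNReal.le_div_iff_mul_le (Or.inl ?_) (Or.inl ENNReal.ofReal_ne_top)).2 h2
    exact ne_of_gt (ENNReal.ofReal_pos.2 ht0)
  exact lt_of_lt_of_le ha0 (Filter.le_liminf_of_le (by isBoundedDefault) hfinal)
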